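/- Any set F ⊆ ℝ that meets every nonempty perfect set and is an ARD set is not Lebesgue measurable and does not have the Baire property. -/

import Mathlib

def ARD (B : Set ℝ) : Prop := ∀ x ∈ B, ∀ y ∈ B, x ≠ y → Irrational |x - y|

open Set Topology Filter MeasureTheory Pointwise

/-- In a dense open set, below any nontrivial interval, we can find two disjoint closed
subintervals of at most half the length. -/
lemma ard_step (U : Set ℝ) (hU : IsOpen U) (hd : Dense U) (a b : ℝ) (hab : a < b) :
    ∃ p : Bool → ℝ × ℝ, (∀ i, (p i).1 < (p i).2) ∧
      (∀ i, Icc (p i).1 (p i).2 ⊆ Ioo a b ∩ U) ∧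
      (Icc (p true).1 (p true).2 ∩ Icc (p false).1 (p false).2 = ∅) ∧
      (∀ i, (p i).2 - (p i).1 ≤ (b - a) / 2) := by
  obtain ⟨x, hx⟩ := hd.inter_open_nonempty (Ioo a b) isOpen_Ioo (nonempty_Ioo.2 hab)
  obtain ⟨ε, hε, hball⟩ := Metric.isOpen_iff.1 (isOpen_Ioo.inter hU) x hx
  have hsub : Ioo (x - ε) (x + ε) ⊆ Ioo a b ∩ U := by
    rw [← Real.ball_eq_Ioo]; exact hball
  have hmem1 : x - ε / 2 ∈ Ioo a b ∩ U := hsub (by constructor <;> linarith)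
  have hmem2 : x + ε / 2 ∈ Ioo a b ∩ U := hsub (by constructor <;> linarith)
  have hba : ε < b - a := by
    have h1 := hmem1.1.1
    have h2 := hmem2.1.2
    linarith
  refine ⟨fun i => if i then (x - ε / 2, x - ε / 4) else (x + ε / 4, x + ε / 2), ?_, ?_, ?_, ?_⟩
  · rintro (_ | _) <;> simp <;> linarith
  · rintro (_ | _) <;> simp only [if_true, if_false, Bool.false_eq_true] <;>
      refine (Icc_subset_Ioo (by linarith) (by linarith)).trans hsub
  · simp only [if_true, Bool.false_eq_true, if_false]
    rw [eq_empty_iff_forall_notMem]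
    rintro y ⟨⟨-, h1⟩, ⟨h2, -⟩⟩
    linarith
  · rintro (_ | _) <;> simp <;> linarith

/-- The binary tree of intervals given by iterating a choice function `p`. -/
noncomputable def ardTree (p : ℕ → ℝ → ℝ → Bool → ℝ × ℝ) : List Bool → ℝ × ℝ
  | [] => ((0 : ℝ), (1 : ℝ))
  | i :: t => p t.length (ardTree p t).1 (ardTree p t).2 i

/-- The length-`n` prefix (as a reversed list) of a branch `z`. -/
def ardPre (z : ℕ → Bool) : ℕ → List Bool
  | 0 => []
  | n + 1 => z n :: ardPre z n

lemma ardPre_length (z : ℕ → Bool) (n : ℕ) : (ardPre z n).length = n := by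
  induction n with
  | zero => rfl
  | succ n ih => simp [ardPre, ih]

lemma ardPre_congr {z w : ℕ → Bool} (n : ℕ) (h : ∀ k < n, z k = w k) :
    ardPre z n = ardPre w n := by
  induction n with
  | zero => rfl
  | succ n ih =>
    simp only [ardPre]
    rw [h n (Nat.lt_succ_self n), ih (fun k hk => h k (hk.trans (Nat.lt_succ_self n)))]

/-- Any countable intersection of dense open subsets of `ℝ` contains a nonempty perfect set. -/
lemma exists_perfect_subset_iInter (U : ℕ → Set ℝ) (ho : ∀ n, IsOpen (U n))
    (hd : ∀ n, Dense (U n)) :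
    ∃ P : Set ℝ, Perfect P ∧ P.Nonempty ∧ P ⊆ ⋂ n, U n := by
  choose! p h1 h2 h3 h4 using fun n => ard_step (U n) (ho n) (hd n)
  set g : List Bool → ℝ × ℝ := ardTree p with hg
  -- basic interval facts
  have hg1 : ∀ s, (g s).1 < (g s).2 := by
    intro s
    induction s with
    | nil => norm_num [hg, ardTree]
    | cons i t ih => exact h1 t.length _ _ ih i
  set J : List Bool → Set ℝ := fun s => Icc (g s).1 (g s).2 with hJ
  have hsub : ∀ s i, J (i :: s) ⊆ Ioo (g s).1 (g s).2 ∩ U s.length :=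
    fun s i => h2 s.length _ _ (hg1 s) i
  have hdisj : ∀ s, J (true :: s) ∩ J (false :: s) = ∅ := fun s => h3 s.length _ _ (hg1 s)
  have hlen : ∀ s i, (g (i :: s)).2 - (g (i :: s)).1 ≤ ((g s).2 - (g s).1) / 2 :=
    fun s i => h4 s.length _ _ (hg1 s) i
  -- branches
  have hnest : ∀ z n, J (ardPre z (n + 1)) ⊆ J (ardPre z n) := by
    intro z n
    exact (hsub (ardPre z n) (z n)).trans (inter_subset_left.trans Ioo_subset_Icc_self)
  have hchain : ∀ z n m, n ≤ m → J (ardPre z m) ⊆ J (ardPre z n) := by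
    intro z n m hnm
    induction m with
    | zero => rw [Nat.le_zero.1 hnm]
    | succ m ih =>
      rcases Nat.lt_or_ge n (m + 1) with h | h
      · exact (hnest z m).trans (ih (Nat.lt_succ_iff.1 h))
      · rw [Nat.le_antisymm hnm h]
  set X : (ℕ → Bool) → ℝ := fun z => ⨆ n, (g (ardPre z n)).1 with hX
  have hmono : ∀ z, Monotone fun n => (g (ardPre z n)).1 := by
    intro z
    apply monotone_nat_of_le_succ
    intro n
    have : (g (ardPre z (n + 1))).1 ∈ J (ardPre z n) :=
      hnest z n ⟨le_refl _, (hg1 _).le⟩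
    exact this.1
  have hself : ∀ z n, (g (ardPre z n)).1 ∈ J (ardPre z n) := fun z n => ⟨le_refl _, (hg1 _).le⟩
  have hbdd : ∀ z, BddAbove (range fun n => (g (ardPre z n)).1) := by
    intro z
    refine ⟨(g (ardPre z 0)).2, ?_⟩
    rintro y ⟨n, rfl⟩
    exact (hchain z 0 n (Nat.zero_le n) (hself z n)).2
  have hXmem : ∀ z n, X z ∈ J (ardPre z n) := by
    intro z n
    constructor
    · exact le_ciSup (hbdd z) n
    · apply ciSup_le
      intro m
      rcases le_total m n with h | h
      · exact (hmono z h).trans (hg1 _).le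
      · exact (hchain z n m h (hself z m)).2
  have hdiam : ∀ z n, (g (ardPre z n)).2 - (g (ardPre z n)).1 ≤ (1 / 2) ^ n := by
    intro z n
    induction n with
    | zero => norm_num [ardPre, hg, ardTree]
    | succ n ih =>
      have := hlen (ardPre z n) (z n)
      have h2 : ((g (ardPre z n)).2 - (g (ardPre z n)).1) / 2 ≤ (1 / 2) ^ n / 2 := by linarith
      calc (g (ardPre z (n + 1))).2 - (g (ardPre z (n + 1))).1
          ≤ ((g (ardPre z n)).2 - (g (ardPre z n)).1) / 2 := this
        _ ≤ (1 / 2) ^ n / 2 := h2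
        _ = (1 / 2) ^ (n + 1) := by ring
  have hdist : ∀ z w n, ardPre z n = ardPre w n → dist (X z) (X w) ≤ (1 / 2) ^ n := by
    intro z w n h
    have h1 := hXmem z n
    have h2 := hXmem w n
    rw [h] at h1
    exact (Real.dist_le_of_mem_Icc h1 h2).trans (hdiam w n)
  -- flipping a coordinate gives a different point
  have hflip_ne : ∀ z n, X (Function.update z n (!z n)) ≠ X z := by
    intro z n hEq
    set w := Function.update z n (!z n) with hw
    have hpre : ardPre w n = ardPre z n := by
      apply ardPre_congr
      intro k hk
      simp [hw, Function.update, Nat.ne_of_lt hk]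
    have hm1 : X w ∈ J ((!z n) :: ardPre z n) := by
      have := hXmem w (n + 1)
      simp only [ardPre, hpre] at this
      simpa [hw, Function.update_self] using this
    have hm2 : X z ∈ J (z n :: ardPre z n) := hXmem z (n + 1)
    rw [hEq] at hm1
    cases hz : z n
    · have : X z ∈ J (true :: ardPre z n) ∩ J (false :: ardPre z n) := by
        constructor
        · simpa [hz] using hm1
        · simpa [hz] using hm2
      rw [hdisj] at this
      exact this
    · have : X z ∈ J (true :: ardPre z n) ∩ J (false :: ardPre z n) := by
        constructor
        · simpa [hz] using hm2
        · simpa [hz] using hm1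
      rw [hdisj] at this
      exact this
  -- the perfect set
  refine ⟨closure (range X), ?_, ?_, ?_⟩
  · apply Preperfect.perfect_closure
    rintro x ⟨z, rfl⟩
    rw [accPt_iff_nhds]
    intro V hV
    obtain ⟨ε, hε, hball⟩ := Metric.mem_nhds_iff.1 hV
    obtain ⟨n, hn⟩ : ∃ n : ℕ, ((1 : ℝ) / 2) ^ n < ε :=
      exists_pow_lt_of_lt_one hε (by norm_num)
    refine ⟨X (Function.update z n (!z n)), ⟨?_, ⟨_, rfl⟩⟩, hflip_ne z n⟩
    apply hball
    rw [Metric.mem_ball]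
    refine lt_of_le_of_lt (hdist _ z n ?_) hn
    apply ardPre_congr
    intro k hk
    simp [Function.update, Nat.ne_of_lt hk]
  · exact ⟨X (fun _ => true), subset_closure ⟨_, rfl⟩⟩
  · apply subset_iInter
    intro n
    have hDcl : IsClosed (⋃ s ∈ {s : List Bool | s.length = n + 1}, J s) := by
      apply Set.Finite.isClosed_biUnion (List.finite_length_eq Bool (n + 1))
      intro s _
      exact isClosed_Icc
    have hrange : range X ⊆ ⋃ s ∈ {s : List Bool | s.length = n + 1}, J s := by
      rintro x ⟨z, rfl⟩
      exact mem_biUnion (ardPre_length z (n + 1)) (hXmem z (n + 1))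
    have hDU : (⋃ s ∈ {s : List Bool | s.length = n + 1}, J s) ⊆ U n := by
      rintro x hx
      obtain ⟨s, hs, hxs⟩ := mem_iUnion₂.1 hx
      rcases s with _ | ⟨i, t⟩
      · simp at hs
      · have ht : t.length = n := by simpa using hs
        have := (hsub t i hxs).2
        rwa [ht] at this
    exact (closure_minimal hrange hDcl).trans hDU

/-- Two points of an ARD set cannot differ by a nonzero rational. -/
lemma ard_no_rat_diff {F : Set ℝ} (hARD : ARD F) {x y : ℝ} (hx : x ∈ F) (hy : y ∈ F)
    (q : ℚ) (hq : q ≠ 0) (hxy : x - y = (q : ℝ)) : False := by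
  have hne : x ≠ y := by
    intro h
    rw [h, sub_self] at hxy
    exact hq (by exact_mod_cast hxy.symm)
  have h2 := hARD x hx y hy hne
  rw [hxy] at h2
  have habs : |((q : ℝ))| = ((|q| : ℚ) : ℝ) := by push_cast; ring
  rw [habs] at h2
  exact Rat.not_irrational _ h2

/-- A set meeting every nonempty perfect set is not meager. -/
lemma ard_not_meager (F : Set ℝ)
    (hmeet : ∀ P : Set ℝ, Perfect P → P.Nonempty → (F ∩ P).Nonempty)
    (h : Fᶜ ∈ residual ℝ) : False := by
  rw [mem_residual] at h
  obtain ⟨t, hts, htG, htd⟩ := h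
  obtain ⟨T, hTo, hTc, rfl⟩ := htG
  obtain ⟨f, hf⟩ := Set.Countable.exists_eq_range (hTc.insert univ) (insert_nonempty _ _)
  have hopen : ∀ n, IsOpen (f n) := by
    intro n
    have : f n ∈ insert univ T := by rw [hf]; exact ⟨n, rfl⟩
    rcases this with h | h
    · rw [h]; exact isOpen_univ
    · exact hTo _ h
  have hsub : ∀ n, ⋂₀ T ⊆ f n := by
    intro n
    have : f n ∈ insert univ T := by rw [hf]; exact ⟨n, rfl⟩
    rcases this with h | h
    · rw [h]; exact subset_univ _
    · exact sInter_subset_of_mem h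
  have hdense : ∀ n, Dense (f n) := fun n => htd.mono (hsub n)
  obtain ⟨P, hP, hPne, hPsub⟩ := exists_perfect_subset_iInter f hopen hdense
  have hPt : P ⊆ ⋂₀ T := by
    have : (⋂ n, f n) ⊆ ⋂₀ T := by
      rw [← sInter_range, ← hf, sInter_insert]
      exact inter_subset_right
    exact hPsub.trans this
  obtain ⟨x, hxF, hxP⟩ := hmeet P hP hPne
  exact (hts (hPt hxP)) hxF

theorem stmt11 (F : Set ℝ)
    (hmeet : ∀ P : Set ℝ, Perfect P → P.Nonempty → (F ∩ P).Nonempty)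
    (hARD : ARD F) :
    ¬ MeasurableSet F ∧ ¬ BaireMeasurableSet F := by
  constructor
  · -- measurability
    intro hF
    by_cases h0 : volume F = 0
    · -- null case: complement contains a compact set of positive measure, hence a perfect set
      have hpos : 0 < volume Fᶜ := by
        rcases eq_or_lt_of_le (zero_le : 0 ≤ volume Fᶜ) with h | h
        · exfalso
          have huniv : volume (univ : Set ℝ) ≤ volume F + volume Fᶜ := by
            rw [← union_compl_self F]
            exact measure_union_le F Fᶜ
          rw [h0, ← h, Real.volume_univ] at huniv
          simp at huniv
        · exact h
      obtain ⟨K, hKsub, hKc, hKpos⟩ := MeasurableSet.exists_lt_isCompact hF.compl hpos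
      have hKunc : ¬K.Countable := by
        intro hc
        rw [hc.measure_zero volume] at hKpos
        exact lt_irrefl _ hKpos
      obtain ⟨P, hP, hPne, hPsub⟩ :=
        exists_perfect_nonempty_of_isClosed_of_not_countable hKc.isClosed hKunc
      obtain ⟨x, hxF, hxP⟩ := hmeet P hP hPne
      exact hKsub (hPsub hxP) hxF
    · -- positive measure case: Steinhaus
      have hpos : 0 < volume F := pos_iff_ne_zero.2 h0
      have hSt : F - F ∈ 𝓝 (0 : ℝ) :=
        MeasureTheory.Measure.sub_mem_nhds_zero_of_addHaar_pos volume F hF hpos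
      obtain ⟨ε, hε, hball⟩ := Metric.mem_nhds_iff.1 hSt
      obtain ⟨q, hq0, hqε⟩ := exists_rat_btwn hε
      have hqmem : (q : ℝ) ∈ F - F := by
        apply hball
        rw [Metric.mem_ball, Real.dist_eq, sub_zero, abs_of_pos hq0]
        exact hqε
      obtain ⟨x, hx, y, hy, hxy⟩ := Set.mem_sub.1 hqmem
      exact ard_no_rat_diff hARD hx hy q (by exact_mod_cast hq0.ne') hxy
  · -- Baire property
    intro hB
    obtain ⟨u, hu, hFu⟩ := hB.residualEq_isOpen
    have hFu' : ∀ᶠ x in residual ℝ, x ∈ F ↔ x ∈ u := eventuallyEq_set.1 hFu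
    rcases eq_empty_or_nonempty u with rfl | ⟨x₀, hx₀⟩
    · -- u empty: F is meager
      have : Fᶜ ∈ residual ℝ := by
        apply Filter.mem_of_superset hFu'
        intro x hx hxF
        exact (hx.1 hxF)
      exact ard_not_meager F hmeet this
    · -- u nonempty: localized Pettis argument
      obtain ⟨ε, hε, hball⟩ := Metric.isOpen_iff.1 hu x₀ hx₀
      obtain ⟨q, hq0, hqε⟩ := exists_rat_btwn hε
      have hE' : (fun x : ℝ => x + (q : ℝ)) ⁻¹' {x | x ∈ F ↔ x ∈ u} ∈ residual ℝ := by
        have hmap := (Homeomorph.addRight (q : ℝ)).residual_map_eq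
        have : {x : ℝ | x ∈ F ↔ x ∈ u} ∈ (residual ℝ).map (Homeomorph.addRight (q : ℝ)) := by
          rw [hmap]; exact hFu'
        exact this
      have hres : ({x : ℝ | x ∈ F ↔ x ∈ u} ∩
          (fun x : ℝ => x + (q : ℝ)) ⁻¹' {x | x ∈ F ↔ x ∈ u}) ∈ residual ℝ :=
        inter_mem hFu' hE'
      have hW : IsOpen (Metric.ball x₀ ε ∩ (fun x : ℝ => x + (q : ℝ)) ⁻¹' Metric.ball x₀ ε) :=
        Metric.isOpen_ball.inter (Metric.isOpen_ball.preimage (by continuity))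
      have hWne : (Metric.ball x₀ ε ∩
          (fun x : ℝ => x + (q : ℝ)) ⁻¹' Metric.ball x₀ ε).Nonempty := by
        refine ⟨x₀, Metric.mem_ball_self hε, ?_⟩
        simp only [mem_preimage, Metric.mem_ball, Real.dist_eq, add_sub_cancel_left]
        rw [abs_of_pos hq0]
        exact hqε
      obtain ⟨x, hxW, hxE, hxE'⟩ :=
        (dense_of_mem_residual hres).inter_open_nonempty _ hW hWne
      have hxF : x ∈ F := hxE.2 (hball hxW.1)
      have hxqF : x + (q : ℝ) ∈ F := hxE'.2 (hball hxW.2)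
      refine ard_no_rat_diff hARD hxqF hxF q (by exact_mod_cast hq0.ne') (by ring)
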